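/- Let k be an integer with 1 ≤ k ≤ 29 and gcd(k, 30) = 1, and let β_k = 8π²/75. For every real x ≥ 1000, the quantity h_k(x) := (∑_{m ≤ x} σ(30m+k)/(30m+k)) − β_k·x satisfies −log(30x + k) − 1 < h_k(x) < log(30x + k) + 2, where the sum runs over positive integers m ≤ x. -/

import Mathlib

open ArithmeticFunction Finset Real

namespace HBaux

noncomputable def g (d : ℕ) : ℝ := if Nat.gcd d 30 = 1 then 1 / (d : ℝ) ^ 2 else 0

lemma g_nonneg (d : ℕ) : 0 ≤ g d := by
  unfold g; split <;> positivity

lemma g_le (d : ℕ) : g d ≤ 1 / (d : ℝ) ^ 2 := by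
  unfold g; split
  · exact le_refl _
  · positivity

lemma gcd30_iff (d : ℕ) : Nat.gcd d 30 = 1 ↔ ¬ 2 ∣ d ∧ ¬ 3 ∣ d ∧ ¬ 5 ∣ d := by
  constructor
  · intro h
    refine ⟨?_, ?_, ?_⟩ <;> intro hd
    · have : 2 ∣ Nat.gcd d 30 := Nat.dvd_gcd hd (by norm_num)
      omega
    · have : 3 ∣ Nat.gcd d 30 := Nat.dvd_gcd hd (by norm_num)
      omega
    · have : 5 ∣ Nat.gcd d 30 := Nat.dvd_gcd hd (by norm_num)
      omega
  · rintro ⟨h2, h3, h5⟩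
    have c2 : Nat.Coprime d 2 := (Nat.coprime_comm.mp ((Nat.Prime.coprime_iff_not_dvd (by norm_num)).mpr h2))
    have c3 : Nat.Coprime d 3 := (Nat.coprime_comm.mp ((Nat.Prime.coprime_iff_not_dvd (by norm_num)).mpr h3))
    have c5 : Nat.Coprime d 5 := (Nat.coprime_comm.mp ((Nat.Prime.coprime_iff_not_dvd (by norm_num)).mpr h5))
    have : Nat.Coprime d (2 * (3 * 5)) := Nat.Coprime.mul_right c2 (Nat.Coprime.mul_right c3 c5)
    simpa using this

lemma hasSum_he (e : ℕ) (he : 1 ≤ e) :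
    HasSum (fun n : ℕ => if e ∣ (n + 1) then 1 / ((n : ℝ) + 1) ^ 2 else 0)
      (π ^ 2 / 6 / (e : ℝ) ^ 2) := by
  have hbase : HasSum (fun n : ℕ => (1 : ℝ) / ((n : ℝ) + 1) ^ 2) (π ^ 2 / 6) := by
    have h := (hasSum_nat_add_iff' (f := fun n : ℕ => (1 : ℝ) / (n : ℝ) ^ 2) 1).mpr hasSum_zeta_two
    simp only [Finset.range_one, Finset.sum_singleton, Nat.cast_zero] at h
    norm_num at h
    convert h using 2 with n
    · rfl
    push_cast
    ring
  have hscaled : HasSum (fun j : ℕ => (1 / (e : ℝ) ^ 2) * (1 / ((j : ℝ) + 1) ^ 2))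
      (π ^ 2 / 6 / (e : ℝ) ^ 2) := by
    have := hbase.mul_left (1 / (e : ℝ) ^ 2)
    convert this using 1
    · rfl
    field_simp
  set ι : ℕ → ℕ := fun j => e * (j + 1) - 1 with hι
  have hinj : Function.Injective ι := by
    intro a b hab
    simp only [hι] at hab
    have h1 : e * (a + 1) = e * (b + 1) := by
      have ha1 : 1 ≤ e * (a + 1) := Nat.one_le_iff_ne_zero.mpr (by positivity)
      have hb1 : 1 ≤ e * (b + 1) := Nat.one_le_iff_ne_zero.mpr (by positivity)
      omega
    have := Nat.eq_of_mul_eq_mul_left (show 0 < e by omega) h1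
    omega
  have hzero : ∀ n, n ∉ Set.range ι →
      (if e ∣ (n + 1) then 1 / ((n : ℝ) + 1) ^ 2 else 0) = 0 := by
    intro n hn
    rw [if_neg]
    intro hdvd
    rcases hdvd with ⟨c, hc⟩
    have hc0 : c ≠ 0 := by rintro rfl; omega
    exact hn ⟨c - 1, by simp only [hι]; have : c - 1 + 1 = c := by omega
                        rw [this]; omega⟩
  rw [← hinj.hasSum_iff hzero]
  convert hscaled using 1
  funext j
  simp only [Function.comp_apply, hι]
  have hpos : 1 ≤ e * (j + 1) := Nat.one_le_iff_ne_zero.mpr (by positivity)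
  rw [if_pos ⟨j + 1, by omega⟩]
  have hcast : ((e * (j + 1) - 1 : ℕ) : ℝ) + 1 = (e : ℝ) * ((j : ℝ) + 1) := by
    have : (e * (j + 1) - 1 : ℕ) + 1 = e * (j + 1) := by omega
    have h2 := congrArg (fun t : ℕ => (t : ℝ)) this
    push_cast at h2
    linarith
  rw [hcast, mul_pow]
  rw [div_mul_div_comm]
  rw [one_mul]

lemma hasSum_g : HasSum (fun n : ℕ => g (n + 1)) (8 * π ^ 2 / 75) := by
  have h1 := hasSum_he 1 (by norm_num)
  have h2 := hasSum_he 2 (by norm_num)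
  have h3 := hasSum_he 3 (by norm_num)
  have h5 := hasSum_he 5 (by norm_num)
  have h6 := hasSum_he 6 (by norm_num)
  have h10 := hasSum_he 10 (by norm_num)
  have h15 := hasSum_he 15 (by norm_num)
  have h30 := hasSum_he 30 (by norm_num)
  have hc := ((((((h1.sub h2).sub h3).sub h5).add h6).add h10).add h15).sub h30
  convert hc using 1
  · rfl
  · funext n
    have i6 : (6 : ℕ) ∣ (n + 1) ↔ ((2 : ℕ) ∣ (n + 1) ∧ (3 : ℕ) ∣ (n + 1)) := by omega
    have i10 : (10 : ℕ) ∣ (n + 1) ↔ ((2 : ℕ) ∣ (n + 1) ∧ (5 : ℕ) ∣ (n + 1)) := by omega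
    have i15 : (15 : ℕ) ∣ (n + 1) ↔ ((3 : ℕ) ∣ (n + 1) ∧ (5 : ℕ) ∣ (n + 1)) := by omega
    have i30 : (30 : ℕ) ∣ (n + 1) ↔
        ((2 : ℕ) ∣ (n + 1) ∧ (3 : ℕ) ∣ (n + 1) ∧ (5 : ℕ) ∣ (n + 1)) := by omega
    have hcst : ((n + 1 : ℕ) : ℝ) = (n : ℝ) + 1 := by push_cast; ring
    simp only [g, gcd30_iff, Nat.one_dvd, if_true, i6, i10, i15, i30, hcst]
    by_cases hh2 : (2 : ℕ) ∣ (n + 1) <;> by_cases hh3 : (3 : ℕ) ∣ (n + 1) <;>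
      by_cases hh5 : (5 : ℕ) ∣ (n + 1) <;>
      simp [hh2, hh3, hh5] <;> ring
  · push_cast
    ring

lemma A_le (D : ℕ) : ∑ n ∈ range D, g (n + 1) ≤ 8 * π ^ 2 / 75 :=
  sum_le_hasSum _ (fun i _ => g_nonneg _) hasSum_g

lemma A_ge (D : ℕ) (hD : 1 ≤ D) :
    8 * π ^ 2 / 75 - 1 / (D : ℝ) ≤ ∑ n ∈ range D, g (n + 1) := by
  have hD0 : (0 : ℝ) < D := by exact_mod_cast hD
  have htail : HasSum (fun n : ℕ => g (n + D + 1))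
      (8 * π ^ 2 / 75 - ∑ n ∈ range D, g (n + 1)) := by
    have h := (hasSum_nat_add_iff' (f := fun n : ℕ => g (n + 1)) D).mpr hasSum_g
    exact h
  have hdom : HasSum (fun n : ℕ => 1 / ((D : ℝ) + n) - 1 / ((D : ℝ) + n + 1)) (1 / (D : ℝ)) := by
    have hnn : ∀ n : ℕ, 0 ≤ 1 / ((D : ℝ) + n) - 1 / ((D : ℝ) + n + 1) := by
      intro n
      have h1 : (0 : ℝ) < (D : ℝ) + n := by positivity
      have h2 : (0 : ℝ) < (D : ℝ) + n + 1 := by positivity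
      have := one_div_le_one_div_of_le h1 (by linarith : (D : ℝ) + n ≤ (D : ℝ) + n + 1)
      linarith
    rw [hasSum_iff_tendsto_nat_of_nonneg hnn]
    have hps : ∀ M : ℕ, ∑ n ∈ range M, (1 / ((D : ℝ) + n) - 1 / ((D : ℝ) + n + 1))
        = 1 / (D : ℝ) - 1 / ((D : ℝ) + M) := by
      intro M
      have h := Finset.sum_range_sub' (f := fun n : ℕ => 1 / ((D : ℝ) + n)) (n := M)
      simp only [Nat.cast_zero, add_zero, Nat.cast_add, Nat.cast_one] at h
      rw [← h]
      apply Finset.sum_congr rfl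
      intro i _
      push_cast
      ring_nf
    simp only [hps]
    have hlim : Filter.Tendsto (fun M : ℕ => 1 / ((D : ℝ) + M)) Filter.atTop (nhds 0) := by
      simp only [one_div]
      apply Filter.Tendsto.inv_tendsto_atTop
      exact Filter.tendsto_atTop_add_const_left _ _ tendsto_natCast_atTop_atTop
    have := Filter.Tendsto.sub (tendsto_const_nhds (x := 1 / (D : ℝ))
      (f := Filter.atTop (α := ℕ))) hlim
    simpa using this
  have hpt : ∀ n : ℕ, g (n + D + 1) ≤ 1 / ((D : ℝ) + n) - 1 / ((D : ℝ) + n + 1) := by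
    intro n
    have h1 : (0 : ℝ) < (D : ℝ) + n := by positivity
    have h2 : (0 : ℝ) < (D : ℝ) + n + 1 := by positivity
    have hg := g_le (n + D + 1)
    have hcast : ((n + D + 1 : ℕ) : ℝ) = (D : ℝ) + n + 1 := by push_cast; ring
    rw [hcast] at hg
    have hsq : 1 / ((D : ℝ) + n + 1) ^ 2 ≤ 1 / (((D : ℝ) + n) * ((D : ℝ) + n + 1)) := by
      apply one_div_le_one_div_of_le (by positivity)
      nlinarith
    have heq : 1 / (((D : ℝ) + n) * ((D : ℝ) + n + 1))
        = 1 / ((D : ℝ) + n) - 1 / ((D : ℝ) + n + 1) := by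
      field_simp
      ring
    linarith
  have := hasSum_le hpt htail hdom
  linarith

lemma residue_exists (k d : ℕ) (hd : 1 ≤ d) (hcop : Nat.gcd d 30 = 1) :
    ∃ r : ℕ, 1 ≤ r ∧ r ≤ d ∧ ∀ m : ℕ, (d ∣ 30 * m + k ↔ m % d = r % d) := by
  haveI : NeZero d := ⟨by omega⟩
  have hcop : Nat.Coprime 30 d := Nat.coprime_comm.mp hcop
  set t : ZMod d := (-(k : ZMod d)) * ((30 : ℕ) : ZMod d)⁻¹ with ht
  have h30 : ((30 : ℕ) : ZMod d) * ((30 : ℕ) : ZMod d)⁻¹ = 1 := ZMod.coe_mul_inv_eq_one 30 hcop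
  have key : ∀ m : ℕ, (d ∣ 30 * m + k ↔ (m : ZMod d) = t) := by
    intro m
    rw [← ZMod.natCast_eq_zero_iff]
    push_cast
    constructor
    · intro h
      have h30m : ((30 : ℕ) : ZMod d) * (m : ZMod d) = -(k : ZMod d) := by
        push_cast
        linear_combination h
      have := congrArg (fun z => ((30 : ℕ) : ZMod d)⁻¹ * z) h30m
      rw [← mul_assoc, mul_comm _ ((30 : ℕ) : ZMod d), h30] at this
      rw [one_mul] at this
      rw [this, ht]
      ring
    · intro h
      rw [h, ht]
      have : ((30 : ℕ) : ZMod d) * (-(k : ZMod d) * ((30 : ℕ) : ZMod d)⁻¹) = -(k : ZMod d) := by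
        rw [mul_comm (-(k : ZMod d)) _, ← mul_assoc, h30, one_mul]
      push_cast at this ⊢
      linear_combination this
  have hvlt : t.val < d := ZMod.val_lt t
  have hvcast : ((t.val : ℕ) : ZMod d) = t := ZMod.natCast_rightInverse t
  refine ⟨if t.val = 0 then d else t.val, ?_, ?_, ?_⟩
  · split <;> omega
  · split <;> omega
  · intro m
    have hr : (if t.val = 0 then d else t.val) % d = t.val % d := by
      split
      · simp_all [Nat.mod_self]
      · rfl
    have hiff : ((m : ZMod d) = t) ↔ m % d = t.val % d := by
      conv_lhs => rw [← hvcast]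
      exact ZMod.natCast_eq_natCast_iff' m t.val d
    rw [key m, hiff, hr]

lemma count_le (k N d : ℕ) (hd : 1 ≤ d) (r : ℕ)
    (hmod : ∀ m : ℕ, (d ∣ 30 * m + k ↔ m % d = r % d)) :
    ((Finset.Icc 1 N).filter (fun m => d ∣ 30 * m + k)).card ≤ N / d + 1 := by
  have h := Finset.card_le_card_of_injOn (fun m => (m - 1) / d)
    (s := (Finset.Icc 1 N).filter (fun m => d ∣ 30 * m + k))
    (t := Finset.range (N / d + 1)) ?_ ?_
  · simpa using h
  · intro m hm
    simp only [Finset.mem_coe, Finset.mem_filter, Finset.mem_Icc] at hm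
    simp only [Finset.mem_coe, Finset.mem_range]
    have : (m - 1) / d ≤ N / d := by
      apply Nat.div_le_div_right
      omega
    omega
  · intro m hm m' hm' heq
    simp only [Finset.coe_filter, Set.mem_setOf_eq, Finset.mem_Icc] at hm hm'
    have e1 : m % d = r % d := (hmod m).mp hm.2
    have e2 : m' % d = r % d := (hmod m').mp hm'.2
    simp only at heq
    by_contra hne
    rcases Nat.lt_or_ge m m' with hlt | hge
    · have hdvd : d ∣ m' - m := (Nat.modEq_iff_dvd' (le_of_lt hlt)).mp (e1.trans e2.symm)
      have : m + d ≤ m' := by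
        rcases hdvd with ⟨c, hc⟩
        rcases Nat.eq_zero_or_pos c with h0 | hpos
        · simp [h0] at hc; omega
        · have hdc : d ≤ d * c := Nat.le_mul_of_pos_right d hpos
          omega
      have : (m - 1) / d + 1 ≤ (m' - 1) / d := by
        have := Nat.div_le_div_right (c := d) (show m - 1 + d ≤ m' - 1 by omega)
        rwa [Nat.add_div_right _ (by omega)] at this
      omega
    · have hlt : m' < m := by omega
      have hdvd : d ∣ m - m' := (Nat.modEq_iff_dvd' (le_of_lt hlt)).mp (e2.trans e1.symm)
      have : m' + d ≤ m := by
        rcases hdvd with ⟨c, hc⟩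
        rcases Nat.eq_zero_or_pos c with h0 | hpos
        · simp [h0] at hc; omega
        · have hdc : d ≤ d * c := Nat.le_mul_of_pos_right d hpos
          omega
      have : (m' - 1) / d + 1 ≤ (m - 1) / d := by
        have := Nat.div_le_div_right (c := d) (show m' - 1 + d ≤ m - 1 by omega)
        rwa [Nat.add_div_right _ (by omega)] at this
      omega

lemma count_ge (k N d : ℕ) (hd : 1 ≤ d) (r : ℕ) (hr1 : 1 ≤ r) (hrd : r ≤ d)
    (hmod : ∀ m : ℕ, (d ∣ 30 * m + k ↔ m % d = r % d)) :
    N / d ≤ ((Finset.Icc 1 N).filter (fun m => d ∣ 30 * m + k)).card := by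
  have h := Finset.card_le_card_of_injOn (fun j => r + (j - 1) * d)
    (s := Finset.Icc 1 (N / d))
    (t := (Finset.Icc 1 N).filter (fun m => d ∣ 30 * m + k)) ?_ ?_
  · simpa using h
  · intro j hj
    simp only [Finset.mem_coe, Finset.mem_Icc] at hj
    simp only [Finset.mem_coe, Finset.mem_filter, Finset.mem_Icc]
    have hjd : j * d ≤ N := le_trans (Nat.mul_le_mul_right d hj.2) (Nat.div_mul_le_self N d)
    have hj1 : j - 1 + 1 = j := by omega
    have hexp : (j - 1) * d + d = j * d := by
      conv_rhs => rw [← hj1]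
      ring
    refine ⟨⟨by omega, by omega⟩, ?_⟩
    rw [hmod]
    rw [Nat.add_mul_mod_self_right]
  · intro j hj j' hj' heq
    simp only [Finset.coe_Icc, Set.mem_Icc] at hj hj'
    simp only at heq
    have : (j - 1) * d = (j' - 1) * d := by omega
    have := Nat.eq_of_mul_eq_mul_right (show 0 < d by omega) this
    omega

lemma coprime_of_dvd (k d m : ℕ) (hk : Nat.gcd k 30 = 1) (hdvd : d ∣ 30 * m + k) :
    Nat.gcd d 30 = 1 := by
  set e := Nat.gcd d 30 with he
  have h1 : e ∣ 30 * m + k := dvd_trans (Nat.gcd_dvd_left d 30) hdvd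
  have h2 : e ∣ 30 * m := Dvd.dvd.mul_right (Nat.gcd_dvd_right d 30) m
  have h3 : e ∣ k := (Nat.dvd_add_right h2).mp h1
  have h4 : e ∣ Nat.gcd k 30 := Nat.dvd_gcd h3 (Nat.gcd_dvd_right d 30)
  rw [hk] at h4
  exact Nat.eq_one_of_dvd_one h4

lemma harm_le (J : ℕ) : ∑ j ∈ Finset.Icc 1 J, 1 / (j : ℝ) ≤ 1 + Real.log J := by
  have h := harmonic_le_one_add_log J
  rw [harmonic_eq_sum_Icc] at h
  push_cast at h
  simpa [one_div] using h

lemma H_le (D : ℕ) (hD : 3 ≤ D) :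
    ∑ d ∈ Finset.Icc 1 D, (if Nat.gcd d 30 = 1 then 1 / (d : ℝ) else 0)
      ≤ 3 / 2 + 1 / 2 * Real.log D := by
  set J := (D - 1) / 2 with hJdef
  have hJ1 : 1 ≤ J := by omega
  have hJD : J ≤ D := by omega
  have hsplit : Finset.Icc 1 D = insert 1 (Finset.Icc 2 D) := by
    ext a
    simp only [Finset.mem_Icc, Finset.mem_insert]
    omega
  rw [hsplit, Finset.sum_insert (by simp)]
  have h1 : (if Nat.gcd 1 30 = 1 then 1 / ((1 : ℕ) : ℝ) else 0) = 1 := by norm_num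
  rw [h1]
  have step1 : ∑ d ∈ Finset.Icc 2 D, (if Nat.gcd d 30 = 1 then 1 / (d : ℝ) else 0)
      ≤ ∑ d ∈ Finset.Icc 2 D, (if d % 2 = 1 then 1 / (d : ℝ) else 0) := by
    apply Finset.sum_le_sum
    intro d hd
    by_cases hc : Nat.gcd d 30 = 1
    · have hodd : d % 2 = 1 := by
        have h2 := (gcd30_iff d).mp hc
        omega
      simp [hc, hodd]
    · simp only [hc, if_false]
      split <;> positivity
  have himg : (Finset.Icc 2 D).filter (fun d => d % 2 = 1)
      = (Finset.Icc 1 J).image (fun j => 2 * j + 1) := by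
    ext a
    simp only [Finset.mem_filter, Finset.mem_Icc, Finset.mem_image]
    constructor
    · rintro ⟨⟨ha1, ha2⟩, ha3⟩
      exact ⟨a / 2, by omega, by omega⟩
    · rintro ⟨j, hj, rfl⟩
      omega
  have step2 : ∑ d ∈ Finset.Icc 2 D, (if d % 2 = 1 then 1 / (d : ℝ) else 0)
      = ∑ j ∈ Finset.Icc 1 J, 1 / ((2 * j + 1 : ℕ) : ℝ) := by
    rw [← Finset.sum_filter, himg, Finset.sum_image]
    intro a _ b _ h
    simp only at h
    omega
  have step3 : ∑ j ∈ Finset.Icc 1 J, 1 / ((2 * j + 1 : ℕ) : ℝ)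
      ≤ ∑ j ∈ Finset.Icc 1 J, 1 / 2 * (1 / (j : ℝ)) := by
    apply Finset.sum_le_sum
    intro j hj
    simp only [Finset.mem_Icc] at hj
    have hj0 : (0 : ℝ) < j := by exact_mod_cast hj.1
    have h2j : (0 : ℝ) < 2 * (j : ℝ) := by linarith
    have hle : 1 / ((2 * j + 1 : ℕ) : ℝ) ≤ 1 / (2 * (j : ℝ)) := by
      apply one_div_le_one_div_of_le h2j
      push_cast
      linarith
    calc 1 / ((2 * j + 1 : ℕ) : ℝ) ≤ 1 / (2 * (j : ℝ)) := hle
      _ = 1 / 2 * (1 / (j : ℝ)) := by rw [one_div_mul_eq_div]; ring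
  have step4 : ∑ j ∈ Finset.Icc 1 J, 1 / 2 * (1 / (j : ℝ))
      = 1 / 2 * ∑ j ∈ Finset.Icc 1 J, 1 / (j : ℝ) := by
    rw [Finset.mul_sum]
  have step5 := harm_le J
  have hJpos : (0 : ℝ) < J := by exact_mod_cast hJ1
  have hlogJ : Real.log J ≤ Real.log D := by
    apply Real.log_le_log hJpos
    exact_mod_cast hJD
  calc 1 + ∑ d ∈ Finset.Icc 2 D, (if Nat.gcd d 30 = 1 then 1 / (d : ℝ) else 0)
      ≤ 1 + 1 / 2 * ∑ j ∈ Finset.Icc 1 J, 1 / (j : ℝ) := by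
        rw [← step4]
        linarith [step1, step2.le, step3]
    _ ≤ 1 + 1 / 2 * (1 + Real.log J) := by linarith
    _ ≤ 3 / 2 + 1 / 2 * Real.log D := by linarith

end HBaux

open HBaux

set_option maxHeartbeats 2000000 in
theorem h_bounds (k : ℕ) (hk1 : 1 ≤ k) (hk2 : k ≤ 29) (hk : Nat.gcd k 30 = 1)
    (x : ℝ) (hx : x ≥ 1000) :
    -Real.log (30 * x + k) - 1 <
      (∑ m ∈ Finset.Icc 1 ⌊x⌋₊, (sigma 1 (30 * m + k) : ℝ) / (30 * m + k)) -
        (8 * π ^ 2 / 75) * x ∧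
    (∑ m ∈ Finset.Icc 1 ⌊x⌋₊, (sigma 1 (30 * m + k) : ℝ) / (30 * m + k)) -
        (8 * π ^ 2 / 75) * x <
      Real.log (30 * x + k) + 2 := by
  have hx0 : (0 : ℝ) ≤ x := by linarith
  set N := ⌊x⌋₊ with hNdef
  have hN1000 : 1000 ≤ N := Nat.le_floor (by exact_mod_cast hx)
  have hNx : (N : ℝ) ≤ x := Nat.floor_le hx0
  have hxN : x < N + 1 := Nat.lt_floor_add_one x
  set D := 30 * N + k with hDdef
  have hD1 : 1 ≤ D := by omega
  have hD3 : 3 ≤ D := by omega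
  have hDpos : (0 : ℝ) < D := by exact_mod_cast hD1
  have hk1R : (1 : ℝ) ≤ k := by exact_mod_cast hk1
  -- Step 1: rewrite each summand as a sum over a fixed divisor range
  have hstep : ∀ m ∈ Finset.Icc 1 N, (sigma 1 (30 * m + k) : ℝ) / (30 * m + k)
      = ∑ d ∈ Finset.Icc 1 D, (if d ∣ 30 * m + k then 1 / (d : ℝ) else 0) := by
    intro m hm
    simp only [Finset.mem_Icc] at hm
    have hn0 : 0 < 30 * m + k := by omega
    have hcastn : (30 : ℝ) * (m : ℝ) + (k : ℝ) = ((30 * m + k : ℕ) : ℝ) := by push_cast; ring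
    have h1 : (sigma 1 (30 * m + k) : ℝ) / ((30 * m + k : ℕ) : ℝ)
        = ∑ d ∈ (30 * m + k).divisors, 1 / (d : ℝ) := by
      rw [sigma_one_apply, Nat.cast_sum, Finset.sum_div, eq_comm,
        ← Nat.sum_div_divisors (30 * m + k) (fun d => 1 / (d : ℝ))]
      apply Finset.sum_congr rfl
      intro d hd
      rw [Nat.mem_divisors] at hd
      have hd0 : 0 < d := Nat.pos_of_dvd_of_pos hd.1 hn0
      rw [Nat.cast_div hd.1 (by exact_mod_cast hd0.ne')]
      rw [one_div_div]
    have h2 : ∑ d ∈ (30 * m + k).divisors, 1 / (d : ℝ)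
        = ∑ d ∈ Finset.Icc 1 D, (if d ∣ 30 * m + k then 1 / (d : ℝ) else 0) := by
      rw [← Finset.sum_filter]
      apply Finset.sum_congr _ (fun _ _ => rfl)
      ext a
      simp only [Nat.mem_divisors, Finset.mem_filter, Finset.mem_Icc]
      constructor
      · rintro ⟨ha, -⟩
        have ha0 : 0 < a := Nat.pos_of_dvd_of_pos ha hn0
        have haD : a ≤ 30 * m + k := Nat.le_of_dvd hn0 ha
        exact ⟨⟨by omega, by omega⟩, ha⟩
      · rintro ⟨-, ha⟩
        exact ⟨ha, by omega⟩
    rw [show (30 : ℝ) * (m : ℝ) + (k : ℝ) = ((30 * m + k : ℕ) : ℝ) from hcastn]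
    rw [h1, h2]
  have hS : (∑ m ∈ Finset.Icc 1 N, (sigma 1 (30 * m + k) : ℝ) / (30 * m + k))
      = ∑ d ∈ Finset.Icc 1 D,
          ((((Finset.Icc 1 N).filter (fun m => d ∣ 30 * m + k)).card : ℝ) * (1 / (d : ℝ))) := by
    rw [Finset.sum_congr rfl hstep, Finset.sum_comm]
    apply Finset.sum_congr rfl
    intro d _
    rw [← Finset.sum_filter, Finset.sum_const, nsmul_eq_mul]
  -- per-d bounds
  have hterm_up : ∀ d ∈ Finset.Icc 1 D,
      ((((Finset.Icc 1 N).filter (fun m => d ∣ 30 * m + k)).card : ℝ) * (1 / (d : ℝ)))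
        ≤ (N : ℝ) * g d + (if Nat.gcd d 30 = 1 then 1 / (d : ℝ) else 0) := by
    intro d hd
    simp only [Finset.mem_Icc] at hd
    have hd0 : (0 : ℝ) < d := by exact_mod_cast hd.1
    by_cases hc : Nat.gcd d 30 = 1
    · obtain ⟨r, hr1, hrd, hmod⟩ := residue_exists k d hd.1 hc
      have hcard := count_le k N d hd.1 r hmod
      have hcardR : ((((Finset.Icc 1 N).filter (fun m => d ∣ 30 * m + k)).card : ℝ))
          ≤ ((N / d : ℕ) : ℝ) + 1 := by exact_mod_cast hcard
      have hdiv : ((N / d : ℕ) : ℝ) ≤ (N : ℝ) / d := Nat.cast_div_le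
      have hmain : ((((Finset.Icc 1 N).filter (fun m => d ∣ 30 * m + k)).card : ℝ) * (1 / (d : ℝ)))
          ≤ ((N : ℝ) / d + 1) * (1 / (d : ℝ)) := by
        apply mul_le_mul_of_nonneg_right (by linarith) (by positivity)
      have heq : ((N : ℝ) / d + 1) * (1 / (d : ℝ)) = (N : ℝ) * (1 / (d : ℝ) ^ 2) + 1 / (d : ℝ) := by
        field_simp
      rw [g, if_pos hc, if_pos hc]
      linarith
    · have hempty : (Finset.Icc 1 N).filter (fun m => d ∣ 30 * m + k) = ∅ := by
        rw [Finset.filter_eq_empty_iff]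
        intro m _ hdvd
        exact hc (coprime_of_dvd k d m hk hdvd)
      rw [hempty, g, if_neg hc, if_neg hc]
      simp
  have hterm_lo : ∀ d ∈ Finset.Icc 1 D,
      (N : ℝ) * g d - (if Nat.gcd d 30 = 1 then 1 / (d : ℝ) else 0)
        ≤ ((((Finset.Icc 1 N).filter (fun m => d ∣ 30 * m + k)).card : ℝ) * (1 / (d : ℝ))) := by
    intro d hd
    simp only [Finset.mem_Icc] at hd
    have hd0 : (0 : ℝ) < d := by exact_mod_cast hd.1
    by_cases hc : Nat.gcd d 30 = 1
    · obtain ⟨r, hr1, hrd, hmod⟩ := residue_exists k d hd.1 hc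
      have hcard := count_ge k N d hd.1 r hr1 hrd hmod
      have hcardR : ((N / d : ℕ) : ℝ)
          ≤ ((((Finset.Icc 1 N).filter (fun m => d ∣ 30 * m + k)).card : ℝ)) := by
        exact_mod_cast hcard
      have hdm := Nat.div_add_mod N d
      have hmlt := Nat.mod_lt N (show 0 < d by omega)
      have hlow : (N : ℝ) / d - 1 ≤ ((N / d : ℕ) : ℝ) := by
        have hcst : (N : ℝ) = (d : ℝ) * ((N / d : ℕ) : ℝ) + ((N % d : ℕ) : ℝ) := by
          exact_mod_cast hdm.symm
        have hmltR : ((N % d : ℕ) : ℝ) < (d : ℝ) := by exact_mod_cast hmlt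
        rw [sub_le_iff_le_add, div_le_iff₀ hd0]
        nlinarith
      have hmain : ((N : ℝ) / d - 1) * (1 / (d : ℝ))
          ≤ ((((Finset.Icc 1 N).filter (fun m => d ∣ 30 * m + k)).card : ℝ) * (1 / (d : ℝ))) := by
        apply mul_le_mul_of_nonneg_right (by linarith) (by positivity)
      have heq : ((N : ℝ) / d - 1) * (1 / (d : ℝ)) = (N : ℝ) * (1 / (d : ℝ) ^ 2) - 1 / (d : ℝ) := by
        field_simp
      rw [g, if_pos hc, if_pos hc]
      linarith
    · have hempty : (Finset.Icc 1 N).filter (fun m => d ∣ 30 * m + k) = ∅ := by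
        rw [Finset.filter_eq_empty_iff]
        intro m _ hdvd
        exact hc (coprime_of_dvd k d m hk hdvd)
      rw [hempty, g, if_neg hc, if_neg hc]
      simp
  set A := ∑ d ∈ Finset.Icc 1 D, g d with hAdef
  set H := ∑ d ∈ Finset.Icc 1 D, (if Nat.gcd d 30 = 1 then 1 / (d : ℝ) else 0) with hHdef
  have hS_up : (∑ m ∈ Finset.Icc 1 N, (sigma 1 (30 * m + k) : ℝ) / (30 * m + k))
      ≤ (N : ℝ) * A + H := by
    rw [hS]
    calc _ ≤ ∑ d ∈ Finset.Icc 1 D,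
        ((N : ℝ) * g d + (if Nat.gcd d 30 = 1 then 1 / (d : ℝ) else 0)) :=
          Finset.sum_le_sum hterm_up
      _ = (N : ℝ) * A + H := by rw [Finset.sum_add_distrib, ← Finset.mul_sum]
  have hS_lo : (N : ℝ) * A - H
      ≤ (∑ m ∈ Finset.Icc 1 N, (sigma 1 (30 * m + k) : ℝ) / (30 * m + k)) := by
    rw [hS]
    calc (N : ℝ) * A - H = ∑ d ∈ Finset.Icc 1 D,
        ((N : ℝ) * g d - (if Nat.gcd d 30 = 1 then 1 / (d : ℝ) else 0)) := by
          rw [Finset.sum_sub_distrib, ← Finset.mul_sum]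
      _ ≤ _ := Finset.sum_le_sum hterm_lo
  -- A bounds
  have hA_range : A = ∑ n ∈ range D, g (n + 1) := by
    rw [hAdef, show Finset.Icc 1 D = Finset.Ico 1 (D + 1) by rfl, Finset.sum_Ico_eq_sum_range]
    simp only [Nat.add_sub_cancel]
    apply Finset.sum_congr rfl
    intro i _
    rw [add_comm]
  have hA_up : A ≤ 8 * π ^ 2 / 75 := by rw [hA_range]; exact A_le D
  have hA_lo : 8 * π ^ 2 / 75 - 1 / (D : ℝ) ≤ A := by rw [hA_range]; exact A_ge D hD1
  have hH : H ≤ 3 / 2 + 1 / 2 * Real.log D := H_le D hD3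
  have hH0 : 0 ≤ H := by
    rw [hHdef]
    apply Finset.sum_nonneg
    intro d _
    split <;> positivity
  -- numeric facts
  have hβpos : (0 : ℝ) < 8 * π ^ 2 / 75 := by positivity
  have hβlt : 8 * π ^ 2 / 75 < 1.06 := by nlinarith [Real.pi_lt_d2, Real.pi_gt_three]
  have hxk_pos : (0 : ℝ) < 30 * x + k := by linarith
  have hL4 : (4 : ℝ) ≤ Real.log (30 * x + k) := by
    rw [Real.le_log_iff_exp_le hxk_pos]
    have he4 : Real.exp 4 < 55 := by
      have h1 : Real.exp 1 < 2.7182818286 := Real.exp_one_lt_d9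
      have h2 : Real.exp 4 = (Real.exp 1) ^ 4 := by
        rw [← Real.exp_nat_mul]
        norm_num
      rw [h2]
      have h3 : (Real.exp 1) ^ 4 < 2.7182818286 ^ 4 := by
        apply pow_lt_pow_left₀ h1 (le_of_lt (Real.exp_pos 1))
        norm_num
      nlinarith
    linarith
  have hDle : (D : ℝ) ≤ 30 * x + k := by
    rw [hDdef]
    push_cast
    linarith
  have hLD : Real.log D ≤ Real.log (30 * x + k) := Real.log_le_log hDpos hDle
  have hND : (N : ℝ) / (D : ℝ) ≤ 1 / 30 := by
    rw [div_le_div_iff₀ hDpos (by norm_num)]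
    rw [hDdef]
    push_cast
    linarith
  have hN0 : (0 : ℝ) ≤ N := by positivity
  -- final assembly
  constructor
  · -- lower bound
    have h3 : (N : ℝ) * (8 * π ^ 2 / 75 - 1 / (D : ℝ)) ≤ (N : ℝ) * A :=
      mul_le_mul_of_nonneg_left hA_lo hN0
    have h4 : (x - 1) * (8 * π ^ 2 / 75) ≤ (N : ℝ) * (8 * π ^ 2 / 75) :=
      mul_le_mul_of_nonneg_right (by linarith) hβpos.le
    have h5 : (N : ℝ) * (1 / (D : ℝ)) = (N : ℝ) / (D : ℝ) := by ring
    have h6 : (N : ℝ) * (8 * π ^ 2 / 75 - 1 / (D : ℝ))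
        = (N : ℝ) * (8 * π ^ 2 / 75) - (N : ℝ) / (D : ℝ) := by ring
    linarith [hS_lo, hH, hLD, hL4, hND, h3, h4, hβlt]
  · -- upper bound
    have h1 : (N : ℝ) * A ≤ (N : ℝ) * (8 * π ^ 2 / 75) :=
      mul_le_mul_of_nonneg_left hA_up hN0
    have h2 : (N : ℝ) * (8 * π ^ 2 / 75) ≤ x * (8 * π ^ 2 / 75) :=
      mul_le_mul_of_nonneg_right hNx hβpos.le
    linarith [hS_up, hH, hLD, hL4, h1, h2]
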